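/- Let (X_{ij})_{i,j∈ℤ} be a stationary m-dependent random field that is regularly varying with index α∈[2,4). Fix β with 4/(3α) < β < 2(8−α)/(α(10−α)) and η with 5/6 < η < 1, and set ε_n := n^β/b_n. Let Ω_n^{(3)} be the event that there exists 1≤l≤k_n such that the set of positions (i,j) in block B̂_{1,l} with |Â_{ij}| > ε_n is nonempty and is not contained in any square of indices of side length 2m+1 (i.e. in a set {(i,j): i₀≤i≤i₀+2m, j₀≤j≤j₀+2m} for some i₀,j₀). Then k_n·ℙ(Ω_n^{(3)}) → 0 as n→∞. -/

import Mathlib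

open MeasureTheory ProbabilityTheory Filter Matrix

noncomputable section

/-- A real-valued random field indexed by `ℤ × ℤ` is stationary if its finite-dimensional
distributions are invariant under all shifts of `ℤ²`. -/
def IsStationaryField {Ω : Type*} [MeasurableSpace Ω] (μ : Measure Ω)
    (X : ℤ × ℤ → Ω → ℝ) : Prop :=
  ∀ a b : ℤ,
    Measure.map (fun ω => fun p : ℤ × ℤ => X (p.1 + a, p.2 + b) ω) μ =
      Measure.map (fun ω => fun p : ℤ × ℤ => X p ω) μ

/-- A random field `X` is `m`-dependent if any two subfamilies whose index sets are separated
by a (sup-)distance greater than `m` are independent. -/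
def IsMDependent {Ω : Type*} [MeasurableSpace Ω] (μ : Measure Ω)
    (X : ℤ × ℤ → Ω → ℝ) (m : ℕ) : Prop :=
  ∀ A B : Set (ℤ × ℤ),
    (∀ p ∈ A, ∀ q ∈ B, (m : ℤ) < max |p.1 - q.1| |p.2 - q.2|) →
    IndepFun (fun ω => fun p : A => X p.1 ω) (fun ω => fun q : B => X q.1 ω) μ

/-- A positive function is slowly varying if `L (c x) / L x → 1` as `x → ∞` for every `c > 0`. -/
def SlowlyVarying (L : ℝ → ℝ) : Prop :=
  (∀ x : ℝ, 0 < x → 0 < L x) ∧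
    ∀ c : ℝ, 0 < c → Tendsto (fun x => L (c * x) / L x) atTop (nhds 1)

/-- The field is regularly varying with index `α`: `ℙ(|X₀₀| > x) = x^(-α) L(x)`
for a slowly varying `L`. -/
def IsRegVarying {Ω : Type*} [MeasurableSpace Ω] (μ : Measure Ω)
    (X : ℤ × ℤ → Ω → ℝ) (α : ℝ) : Prop :=
  ∃ L : ℝ → ℝ, SlowlyVarying L ∧
    ∀ x : ℝ, 0 < x → (μ {ω | x < |X (0, 0) ω|}).toReal = x ^ (-α) * L x

/-- The symmetrized field `X̂`. -/
def symX {Ω : Type*} (X : ℤ × ℤ → Ω → ℝ) (i j : ℤ) (ω : Ω) : ℝ :=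
  if i ≤ j then X (i, j) ω else X (j, i) ω

/-- `(a_n)` is a normalizing sequence: `a_n → ∞` and `n ℙ(|X₀₀| > a_n) → 1`. -/
def IsNormSeq {Ω : Type*} [MeasurableSpace Ω] (μ : Measure Ω)
    (X : ℤ × ℤ → Ω → ℝ) (a : ℕ → ℝ) : Prop :=
  Tendsto a atTop atTop ∧
    Tendsto (fun n : ℕ => (n : ℝ) * (μ {ω | a n < |X (0, 0) ω|}).toReal) atTop (nhds 1)

/-- The Wigner matrix `Â_n = (X̂_{ij} / b)_{1 ≤ i,j ≤ n}`. -/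
def wignerMat {Ω : Type*} (X : ℤ × ℤ → Ω → ℝ) (b : ℝ) (n : ℕ) (ω : Ω) :
    Matrix (Fin n) (Fin n) ℝ :=
  Matrix.of fun i j => symX X ((i : ℕ) + 1 : ℤ) ((j : ℕ) + 1 : ℤ) ω / b

/-- The `p × n` data matrix `A = (X_{ij} / c)_{1 ≤ i ≤ p, 1 ≤ j ≤ n}`. -/
def dataMat {Ω : Type*} (X : ℤ × ℤ → Ω → ℝ) (c : ℝ) (p n : ℕ) (ω : Ω) :
    Matrix (Fin p) (Fin n) ℝ :=
  Matrix.of fun i j => X (((i : ℕ) + 1 : ℤ), ((j : ℕ) + 1 : ℤ)) ω / c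

/-- Entrywise truncation keeping the entries of absolute value `> t` : `M^{>t}`. -/
def truncGt {p q : ℕ} (M : Matrix (Fin p) (Fin q) ℝ) (t : ℝ) : Matrix (Fin p) (Fin q) ℝ :=
  Matrix.of fun i j => if t < |M i j| then M i j else 0

/-- `M^{<t} := M - M^{>t}`, i.e. the entries of absolute value `≤ t`. -/
def truncLe {p q : ℕ} (M : Matrix (Fin p) (Fin q) ℝ) (t : ℝ) : Matrix (Fin p) (Fin q) ℝ :=
  M - truncGt M t

/-- The spectral norm (largest singular value) of a rectangular real matrix, realized as the
operator norm of the induced map between Euclidean spaces. -/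
def specNorm {p q : ℕ} (M : Matrix (Fin p) (Fin q) ℝ) : ℝ :=
  ‖LinearMap.toContinuousLinearMap (Matrix.toEuclideanLin M)‖

/-- The event that the `(k,l)` block (of size `r × r`, `1`-based block indices) of the
matrix `(X̂_{ij}/b)` has max-norm `> ε`. -/
def blockExceed {Ω : Type*} (X : ℤ × ℤ → Ω → ℝ) (b : ℝ) (r k l : ℕ) (ε : ℝ) (ω : Ω) : Prop :=
  ∃ i ∈ Finset.Ioc ((k - 1) * r) (k * r), ∃ j ∈ Finset.Ioc ((l - 1) * r) (l * r),
    ε < |symX X (i : ℤ) (j : ℤ) ω / b|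

/-- `r_n = n^(1-η)` (as a natural number, via the floor). -/
def rseq (η : ℝ) (n : ℕ) : ℕ := ⌊(n : ℝ) ^ (1 - η)⌋₊

/-- `k_n = n^η` (as a natural number, via the floor). -/
def kseq (η : ℝ) (n : ℕ) : ℕ := ⌊(n : ℝ) ^ η⌋₊

/-- The set of `n` for which `n^(1-η)` and `n^η` are integers. -/
def goodSet (η : ℝ) : Set ℕ :=
  {n | ((rseq η n : ℝ) = (n : ℝ) ^ (1 - η)) ∧ ((kseq η n : ℝ) = (n : ℝ) ^ η)}

/-- `lam` is an eigenvalue of the real matrix `M`. -/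
def IsEigenvalue {n : Type*} [Fintype n] (M : Matrix n n ℝ) (lam : ℝ) : Prop :=
  ∃ v : n → ℝ, v ≠ 0 ∧ M.mulVec v = lam • v

/-- The multiset of singular values of a rectangular real matrix: the square roots of the
eigenvalues of `Mᵀ M` (`= Mᴴ M` over `ℝ`), with multiplicity. -/
def singularValues {p q : ℕ} (M : Matrix (Fin p) (Fin q) ℝ) : Multiset ℝ :=
  Finset.univ.val.map fun i =>
    Real.sqrt ((Matrix.isHermitian_conjTranspose_mul_self M).eigenvalues i)

/-- The eigenvalues of a real symmetric matrix, sorted increasingly (as a list);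
junk value for non-symmetric matrices. -/
def sortedEigs {N : ℕ} (M : Matrix (Fin N) (Fin N) ℝ) : List ℝ :=
  if h : M.IsHermitian then (Finset.univ.val.map h.eigenvalues).sort (· ≤ ·)
  else List.replicate N 0

/-- The index of row `i` of block-row `a` inside a `(k*r) × (k*r)` matrix partitioned
into `r × r` blocks. -/
def blkIdx {k r : ℕ} (a : Fin k) (i : Fin r) : Fin (k * r) :=
  ⟨a.1 * r + i.1, by
    have hi := i.2
    have ha := a.2
    have h1 : a.1 * r + i.1 < (a.1 + 1) * r := by nlinarith
    have h2 : (a.1 + 1) * r ≤ k * r := by nlinarith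
    exact lt_of_lt_of_le h1 h2⟩

/-- The `(a,b)` block (of size `r × r`) of a `(k*r) × (k*r)` matrix. -/
def blockOf {k r : ℕ} (H : Matrix (Fin (k * r)) (Fin (k * r)) ℝ) (a b : Fin k) :
    Matrix (Fin r) (Fin r) ℝ :=
  Matrix.of fun i j => H (blkIdx a i) (blkIdx b j)

/-- The `n × n` matrix with entries `X̂_{ij} 1{|X̂_{ij}| < t}` (not yet normalized). -/
def truncSymMat {Ω : Type*} (X : ℤ × ℤ → Ω → ℝ) (n : ℕ) (t : ℝ) (ω : Ω) :
    Matrix (Fin n) (Fin n) ℝ :=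
  Matrix.of fun i j =>
    if |symX X ((i : ℕ) + 1 : ℤ) ((j : ℕ) + 1 : ℤ) ω| < t
    then symX X ((i : ℕ) + 1 : ℤ) ((j : ℕ) + 1 : ℤ) ω else 0

lemma absSetMeas (t : ℝ) : MeasurableSet {y : ℝ | t < |y|} :=
  measurableSet_lt measurable_const measurable_id.abs

lemma marginal_eq {Ω : Type*} [MeasurableSpace Ω] (μ : Measure Ω) (X : ℤ × ℤ → Ω → ℝ)
    (hmeas : ∀ p, Measurable (X p)) (hstat : IsStationaryField μ X) (p : ℤ × ℤ) (t : ℝ) :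
    μ {ω | t < |X p ω|} = μ {ω | t < |X (0, 0) ω|} := by
  have hF : Measurable fun ω => fun q : ℤ × ℤ => X (q.1 + p.1, q.2 + p.2) ω :=
    measurable_pi_lambda _ fun q => hmeas _
  have hG : Measurable fun ω => fun q : ℤ × ℤ => X q ω :=
    measurable_pi_lambda _ fun q => hmeas _
  have hS : MeasurableSet {h : ℤ × ℤ → ℝ | t < |h (0, 0)|} :=
    measurableSet_lt measurable_const ((measurable_pi_apply ((0,0) : ℤ × ℤ)).abs)
  have h := congrArg (fun ν : Measure ((ℤ × ℤ) → ℝ) => ν {h | t < |h (0, 0)|}) (hstat p.1 p.2)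
  simp only [Measure.map_apply hF hS, Measure.map_apply hG hS] at h
  convert h using 2
  ext ω
  simp
  rfl

lemma pair_indep {Ω : Type*} [MeasurableSpace Ω] (μ : Measure Ω) (X : ℤ × ℤ → Ω → ℝ)
    (m : ℕ) (hdep : IsMDependent μ X m) (p q : ℤ × ℤ)
    (hfar : (m : ℤ) < max |p.1 - q.1| |p.2 - q.2|) (t : ℝ) :
    μ ({ω | t < |X p ω|} ∩ {ω | t < |X q ω|}) = μ {ω | t < |X p ω|} * μ {ω | t < |X q ω|} := by
  have h := hdep {p} {q} (by
    intro p' hp' q' hq'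
    simp only [Set.mem_singleton_iff] at hp' hq'
    subst hp'; subst hq'; exact hfar)
  have hp : p ∈ ({p} : Set (ℤ × ℤ)) := rfl
  have hq : q ∈ ({q} : Set (ℤ × ℤ)) := rfl
  have h2 : IndepFun (X p) (X q) μ := by
    have := h.comp (φ := fun f : ({p} : Set (ℤ × ℤ)) → ℝ => f ⟨p, hp⟩)
      (ψ := fun f : ({q} : Set (ℤ × ℤ)) → ℝ => f ⟨q, hq⟩)
      (measurable_pi_apply _ : Measurable fun f : ({p} : Set (ℤ × ℤ)) → ℝ => f ⟨p, hp⟩) (measurable_pi_apply _ : Measurable fun f : ({q} : Set (ℤ × ℤ)) → ℝ => f ⟨q, hq⟩)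
    exact this
  have := h2.measure_inter_preimage_eq_mul {y : ℝ | t < |y|} {y : ℝ | t < |y|}
    (absSetMeas t) (absSetMeas t)
  exact this

lemma tail_power_bound (T L : ℝ → ℝ) (α α' : ℝ)
    (hanti : ∀ x y : ℝ, 0 < x → x ≤ y → T y ≤ T x)
    (hTL : ∀ x : ℝ, 0 < x → T x = x ^ (-α) * L x)
    (hL : SlowlyVarying L) (h1 : 0 < α') (h2 : α' < α) :
    ∃ C > 0, ∃ x₀ ≥ 1, ∀ x ≥ x₀, T x ≤ C * x ^ (-α') := by
  set δ := α - α' with hδ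
  have hδpos : 0 < δ := by linarith
  have h2δ : (1 : ℝ) < 2 ^ δ := Real.one_lt_rpow_iff_of_pos (by norm_num) |>.mpr (Or.inl ⟨by norm_num, hδpos⟩)
  have hev : ∀ᶠ x in atTop, L (2 * x) / L x < 2 ^ δ :=
    (hL.2 2 (by norm_num)).eventually_lt_const h2δ
  obtain ⟨x₁, hx₁⟩ := eventually_atTop.1 hev
  set x₀ := max x₁ 1 with hx₀def
  have hx₀1 : (1 : ℝ) ≤ x₀ := le_max_right _ _
  have hx₀pos : (0 : ℝ) < x₀ := lt_of_lt_of_le one_pos hx₀1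
  -- the doubling step
  have step : ∀ x : ℝ, x₀ ≤ x → T (2 * x) ≤ 2 ^ (-α') * T x := by
    intro x hx
    have hxpos : 0 < x := lt_of_lt_of_le hx₀pos hx
    have hLx : 0 < L x := hL.1 x hxpos
    have hLd : L (2 * x) ≤ 2 ^ δ * L x := by
      have := (hx₁ x (le_trans (le_max_left _ _) hx)).le
      calc L (2 * x) = L (2 * x) / L x * L x := by field_simp
        _ ≤ 2 ^ δ * L x := by
            apply mul_le_mul_of_nonneg_right this hLx.le
    have h2x : (0:ℝ) < 2 * x := by linarith
    rw [hTL _ h2x, hTL _ hxpos]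
    have hmul : (2 * x) ^ (-α) = 2 ^ (-α) * x ^ (-α) :=
      Real.mul_rpow (by norm_num) hxpos.le
    rw [hmul]
    have hLnn : 0 ≤ L (2 * x) := (hL.1 _ h2x).le
    calc 2 ^ (-α) * x ^ (-α) * L (2 * x) ≤ 2 ^ (-α) * x ^ (-α) * (2 ^ δ * L x) := by
          apply mul_le_mul_of_nonneg_left hLd
          positivity
      _ = 2 ^ (-α') * (x ^ (-α) * L x) := by
          rw [show (-α' : ℝ) = -α + δ by rw [hδ]; ring, Real.rpow_add (by norm_num : (0:ℝ) < 2)]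
          ring
  -- iterate
  have iter : ∀ k : ℕ, T (2 ^ k * x₀) ≤ (2 ^ (-α')) ^ k * T x₀ := by
    intro k
    induction k with
    | zero => simp
    | succ k ih =>
      have hge : x₀ ≤ 2 ^ k * x₀ := by
        nlinarith [(one_le_pow₀ (by norm_num : (1:ℝ) ≤ 2) (n := k))]
      calc T (2 ^ (k+1) * x₀) = T (2 * (2 ^ k * x₀)) := by ring_nf
        _ ≤ 2 ^ (-α') * T (2 ^ k * x₀) := step _ hge
        _ ≤ 2 ^ (-α') * ((2 ^ (-α')) ^ k * T x₀) := by
            apply mul_le_mul_of_nonneg_left ih (by positivity)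
        _ = (2 ^ (-α')) ^ (k+1) * T x₀ := by ring
  have hTx₀pos : 0 < T x₀ := by
    rw [hTL _ hx₀pos]
    exact mul_pos (Real.rpow_pos_of_pos hx₀pos _) (hL.1 _ hx₀pos)
  refine ⟨(2 * x₀) ^ α' * T x₀, by positivity, x₀, hx₀1, ?_⟩
  intro x hx
  have hxpos : 0 < x := lt_of_lt_of_le hx₀pos hx
  have hxdiv : 1 ≤ x / x₀ := (one_le_div hx₀pos).mpr hx
  set k := ⌊Real.logb 2 (x / x₀)⌋₊ with hk
  have hlogb_nonneg : 0 ≤ Real.logb 2 (x / x₀) :=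
    Real.logb_nonneg (by norm_num) hxdiv
  have hlow : (2 : ℝ) ^ (k : ℝ) ≤ x / x₀ := by
    calc (2:ℝ) ^ (k:ℝ) ≤ 2 ^ (Real.logb 2 (x / x₀)) :=
          Real.rpow_le_rpow_of_exponent_le (by norm_num) (Nat.floor_le hlogb_nonneg)
      _ = x / x₀ := Real.rpow_logb (by norm_num) (by norm_num) (by linarith)
  have hhigh : x / x₀ < 2 ^ ((k : ℝ) + 1) := by
    calc x / x₀ = 2 ^ (Real.logb 2 (x / x₀)) :=
          (Real.rpow_logb (by norm_num) (by norm_num) (by linarith)).symm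
      _ < 2 ^ ((k : ℝ) + 1) := by
          apply Real.rpow_lt_rpow_of_exponent_lt (by norm_num)
          push_cast
          exact Nat.lt_floor_add_one _
  have hcast : ((2:ℝ) ^ k : ℝ) = (2:ℝ) ^ (k : ℝ) := (Real.rpow_natCast 2 k).symm
  have h2k : (2:ℝ) ^ k * x₀ ≤ x := by
    rw [hcast]
    calc (2:ℝ) ^ (k:ℝ) * x₀ ≤ (x / x₀) * x₀ := by
          apply mul_le_mul_of_nonneg_right hlow hx₀pos.le
      _ = x := by field_simp
  have h2kpos : (0:ℝ) < 2 ^ k := by positivity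
  have hTx : T x ≤ (2 ^ (-α')) ^ k * T x₀ :=
    le_trans (hanti _ _ (by positivity) h2k) (iter k)
  have hkey : ((2:ℝ) ^ (-α')) ^ k = ((2:ℝ) ^ k) ^ (-α') := by
    rw [hcast, ← Real.rpow_natCast ((2:ℝ) ^ (-α')) k, ← Real.rpow_mul (by norm_num), mul_comm,
      ← Real.rpow_mul (by norm_num)]
  have hbase : x / (2 * x₀) < 2 ^ k := by
    rw [hcast]
    have : (2:ℝ) ^ ((k:ℝ) + 1) = 2 ^ (k:ℝ) * 2 := by
      rw [Real.rpow_add (by norm_num)]; norm_num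
    rw [div_lt_iff₀ (by positivity)]
    nlinarith [hhigh, this, (div_lt_iff₀ hx₀pos).mp hhigh]
  have hmono : ((2:ℝ) ^ k) ^ (-α') ≤ (x / (2 * x₀)) ^ (-α') := by
    apply Real.rpow_le_rpow_of_nonpos (by positivity) hbase.le (by linarith)
  have hfinal : (x / (2 * x₀)) ^ (-α') = (2 * x₀) ^ α' * x ^ (-α') := by
    rw [Real.div_rpow hxpos.le (by positivity), Real.rpow_neg (by positivity : (0:ℝ) ≤ 2 * x₀)]
    field_simp [Real.rpow_natCast]
  calc T x ≤ (2 ^ (-α')) ^ k * T x₀ := hTx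
    _ ≤ (x / (2 * x₀)) ^ (-α') * T x₀ := by
        rw [hkey]; exact mul_le_mul_of_nonneg_right hmono hTx₀pos.le
    _ = (2 * x₀) ^ α' * T x₀ * x ^ (-α') := by rw [hfinal]; ring

lemma extract_far_pair (P : ℕ × ℕ → Prop) (r lo hi m : ℕ)
    (h1 : ∃ i ∈ Finset.Icc 1 r, ∃ j ∈ Finset.Ioc lo hi, P (i, j))
    (h2 : ¬ ∃ i₀ j₀ : ℕ, ∀ i ∈ Finset.Icc 1 r, ∀ j ∈ Finset.Ioc lo hi, P (i, j) →
        (i₀ ≤ i ∧ i ≤ i₀ + 2 * m ∧ j₀ ≤ j ∧ j ≤ j₀ + 2 * m)) :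
    ∃ p ∈ Finset.Icc 1 r ×ˢ Finset.Ioc lo hi, ∃ q ∈ Finset.Icc 1 r ×ˢ Finset.Ioc lo hi,
      P p ∧ P q ∧
      ¬ (p.1 ≤ q.1 + 2 * m ∧ q.1 ≤ p.1 + 2 * m ∧ p.2 ≤ q.2 + 2 * m ∧ q.2 ≤ p.2 + 2 * m) := by
  classical
  by_contra h3
  push_neg at h3
  set S : Finset (ℕ × ℕ) := (Finset.Icc 1 r ×ˢ Finset.Ioc lo hi).filter P with hS
  have hSne : S.Nonempty := by
    obtain ⟨i, hi, j, hj, hP⟩ := h1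
    exact ⟨(i, j), Finset.mem_filter.2 ⟨Finset.mem_product.2 ⟨hi, hj⟩, hP⟩⟩
  have hkey : ∀ p ∈ S, ∀ q ∈ S,
      p.1 ≤ q.1 + 2 * m ∧ q.1 ≤ p.1 + 2 * m ∧ p.2 ≤ q.2 + 2 * m ∧ q.2 ≤ p.2 + 2 * m := by
    intro p hp q hq
    obtain ⟨hpm, hpP⟩ := Finset.mem_filter.1 hp
    obtain ⟨hqm, hqP⟩ := Finset.mem_filter.1 hq
    exact h3 p hpm q hqm hpP hqP
  have hne1 : (S.image Prod.fst).Nonempty := hSne.image _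
  have hne2 : (S.image Prod.snd).Nonempty := hSne.image _
  apply h2
  refine ⟨(S.image Prod.fst).min' hne1, (S.image Prod.snd).min' hne2, ?_⟩
  intro i hi j hj hP
  have hmem : (i, j) ∈ S := Finset.mem_filter.2 ⟨Finset.mem_product.2 ⟨hi, hj⟩, hP⟩
  obtain ⟨p1, hp1S, hp1⟩ := Finset.mem_image.1 ((S.image Prod.fst).min'_mem hne1)
  obtain ⟨p2, hp2S, hp2⟩ := Finset.mem_image.1 ((S.image Prod.snd).min'_mem hne2)
  refine ⟨Finset.min'_le _ _ (Finset.mem_image_of_mem _ hmem), ?_,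
    Finset.min'_le _ _ (Finset.mem_image_of_mem _ hmem), ?_⟩
  · rw [← hp1]
    exact (hkey _ hmem _ hp1S).1
  · rw [← hp2]
    exact (hkey _ hmem _ hp2S).2.2.1

lemma near_count (B : Finset (ℕ × ℕ)) (m : ℕ) (pred : (ℕ × ℕ) × (ℕ × ℕ) → Prop)
    [DecidablePred pred]
    (hpred : ∀ x, pred x → (|(↑(min x.2.1 x.2.2) : ℤ) - ↑(min x.1.1 x.1.2)| ≤ m ∧
        |(↑(max x.2.1 x.2.2) : ℤ) - ↑(max x.1.1 x.1.2)| ≤ m)) :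
    ((B ×ˢ B).filter pred).card ≤ B.card * (2 * (2 * m + 1) ^ 2) := by
  classical
  set partners : ℕ × ℕ → Finset (ℕ × ℕ) := fun p =>
    (Finset.Icc (min p.1 p.2 - m) (min p.1 p.2 + m) ×ˢ
      Finset.Icc (max p.1 p.2 - m) (max p.1 p.2 + m)) ∪
    (Finset.Icc (max p.1 p.2 - m) (max p.1 p.2 + m) ×ˢ
      Finset.Icc (min p.1 p.2 - m) (min p.1 p.2 + m)) with hpart
  have hsub : (B ×ˢ B).filter pred ⊆ B.biUnion (fun p => {p} ×ˢ partners p) := by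
    intro x hx
    obtain ⟨hmem, hpx⟩ := Finset.mem_filter.1 hx
    obtain ⟨h1, h2⟩ := Finset.mem_product.1 hmem
    apply Finset.mem_biUnion.2 ⟨x.1, h1, ?_⟩
    apply Finset.mem_product.2
    refine ⟨Finset.mem_singleton_self _, ?_⟩
    obtain ⟨ha, hb⟩ := hpred x hpx
    rw [abs_le] at ha hb
    rcases le_total x.2.1 x.2.2 with hle | hle
    · apply Finset.mem_union_left
      apply Finset.mem_product.2
      constructor <;> simp only [Finset.mem_Icc] <;> omega
    · apply Finset.mem_union_right
      apply Finset.mem_product.2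
      constructor <;> simp only [Finset.mem_Icc] <;> omega
  calc ((B ×ˢ B).filter pred).card ≤ (B.biUnion (fun p => {p} ×ˢ partners p)).card :=
        Finset.card_le_card hsub
    _ ≤ ∑ p ∈ B, ({p} ×ˢ partners p).card := Finset.card_biUnion_le
    _ ≤ ∑ p ∈ B, (2 * (2 * m + 1) ^ 2) := by
        apply Finset.sum_le_sum
        intro p _
        rw [Finset.card_product, Finset.card_singleton, one_mul]
        calc (partners p).card ≤ _ + _ := Finset.card_union_le _ _
          _ ≤ (2*m+1)*(2*m+1) + (2*m+1)*(2*m+1) := by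
              apply add_le_add <;>
              · rw [Finset.card_product]
                apply Nat.mul_le_mul <;> (rw [Nat.card_Icc]; omega)
          _ ≤ 2 * (2 * m + 1) ^ 2 := by ring_nf; omega
    _ = B.card * (2 * (2 * m + 1) ^ 2) := by rw [Finset.sum_const, smul_eq_mul]

lemma symX_eq' {Ω : Type*} (X : ℤ × ℤ → Ω → ℝ) (i j : ℕ) (ω : Ω) :
    symX X (i : ℤ) (j : ℤ) ω = X ((↑(min i j) : ℤ), (↑(max i j) : ℤ)) ω := by
  rcases le_or_gt i j with h | h
  · simp [symX, (show (i:ℤ) ≤ j from by exact_mod_cast h), min_eq_left h, max_eq_right h]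
  · simp [symX, (show ¬((i:ℤ) ≤ j) from by exact_mod_cast not_le.mpr h),
      min_eq_right h.le, max_eq_left h.le]



def nearPred (m : ℕ) (x : (ℕ × ℕ) × (ℕ × ℕ)) : Prop :=
  |(↑(min x.2.1 x.2.2) : ℤ) - ↑(min x.1.1 x.1.2)| ≤ (m : ℤ) ∧
  |(↑(max x.2.1 x.2.2) : ℤ) - ↑(max x.1.1 x.1.2)| ≤ (m : ℤ)

def farPred (m : ℕ) (x : (ℕ × ℕ) × (ℕ × ℕ)) : Prop :=
  ¬(x.1.1 ≤ x.2.1 + 2 * m ∧ x.2.1 ≤ x.1.1 + 2 * m ∧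
    x.1.2 ≤ x.2.2 + 2 * m ∧ x.2.2 ≤ x.1.2 + 2 * m)

def blockSet (r l : ℕ) : Finset (ℕ × ℕ) :=
  Finset.Icc 1 r ×ˢ Finset.Ioc ((l - 1) * r) (l * r)

def pairEvt {Ω : Type*} (X : ℤ × ℤ → Ω → ℝ) (t : ℝ) (x : (ℕ × ℕ) × (ℕ × ℕ)) : Set Ω :=
  {ω | t < |X ((↑(min x.1.1 x.1.2) : ℤ), (↑(max x.1.1 x.1.2) : ℤ)) ω|} ∩
  {ω | t < |X ((↑(min x.2.1 x.2.2) : ℤ), (↑(max x.2.1 x.2.2) : ℤ)) ω|}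

open scoped ENNReal in
lemma core_estimate {Ω : Type*} [MeasurableSpace Ω] (μ : Measure Ω) [IsProbabilityMeasure μ]
    (X : ℤ × ℤ → Ω → ℝ) (hmeas : ∀ p, Measurable (X p)) (m : ℕ)
    (hstat : IsStationaryField μ X) (hdep : IsMDependent μ X m)
    (k r : ℕ) (t av : ℝ) (hav : 0 < av) :
    (μ {ω | ∃ l ∈ Finset.Icc 1 k,
        (∃ i ∈ Finset.Icc 1 r, ∃ j ∈ Finset.Ioc ((l - 1) * r) (l * r),
          t / av < |symX X (i : ℤ) (j : ℤ) ω / av|) ∧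
        ¬ ∃ i₀ j₀ : ℕ, ∀ i ∈ Finset.Icc 1 r, ∀ j ∈ Finset.Ioc ((l - 1) * r) (l * r),
            t / av < |symX X (i : ℤ) (j : ℤ) ω / av| →
              (i₀ ≤ i ∧ i ≤ i₀ + 2 * m ∧ j₀ ≤ j ∧ j ≤ j₀ + 2 * m)}).toReal
      ≤ ((k * r ^ 4 : ℕ) : ℝ) * ((μ {ω | t < |X (0, 0) ω|}).toReal) ^ 2
        + ((r * r * (2 * (2 * m + 1) ^ 2) : ℕ) : ℝ) * (μ {ω | t < |X (0, 0) ω|}).toReal := by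
  classical
  have hTTne : μ {ω | t < |X (0, 0) ω|} ≠ ⊤ := measure_ne_top μ _
  set TT : ℝ≥0∞ := μ {ω | t < |X (0, 0) ω|} with hTTdef
  set PB : ℕ → Finset ((ℕ × ℕ) × (ℕ × ℕ)) :=
    fun l => (blockSet r l ×ˢ blockSet r l).filter (farPred m) with hPBdef
  have hmarg : ∀ p : ℤ × ℤ, μ {ω | t < |X p ω|} = TT :=
    fun p => marginal_eq μ X hmeas hstat p t
  -- conversion of the exceedance predicate
  have hconv : ∀ (i j : ℕ) (ω : Ω), (t / av < |symX X (i : ℤ) (j : ℤ) ω / av|) ↔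
      t < |X ((↑(min i j) : ℤ), (↑(max i j) : ℤ)) ω| := by
    intro i j ω
    rw [abs_div, abs_of_pos hav, div_lt_div_iff_of_pos_right hav, symX_eq']
  -- subset into union of pair events
  have hsub : {ω | ∃ l ∈ Finset.Icc 1 k,
        (∃ i ∈ Finset.Icc 1 r, ∃ j ∈ Finset.Ioc ((l - 1) * r) (l * r),
          t / av < |symX X (i : ℤ) (j : ℤ) ω / av|) ∧
        ¬ ∃ i₀ j₀ : ℕ, ∀ i ∈ Finset.Icc 1 r, ∀ j ∈ Finset.Ioc ((l - 1) * r) (l * r),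
            t / av < |symX X (i : ℤ) (j : ℤ) ω / av| →
              (i₀ ≤ i ∧ i ≤ i₀ + 2 * m ∧ j₀ ≤ j ∧ j ≤ j₀ + 2 * m)} ⊆
      ⋃ l ∈ Finset.Icc 1 k, ⋃ x ∈ PB l, pairEvt X t x := by
    intro ω hω
    simp only [Set.mem_setOf_eq] at hω
    obtain ⟨l, hl, h1, h2⟩ := hω
    obtain ⟨p, hp, q, hq, hPp, hPq, hfarN⟩ :=
      extract_far_pair (fun p => t / av < |symX X (p.1 : ℤ) (p.2 : ℤ) ω / av|)
        r ((l - 1) * r) (l * r) m h1 h2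
    refine Set.mem_iUnion₂.2 ⟨l, hl, Set.mem_iUnion₂.2 ⟨(p, q), ?_, ?_⟩⟩
    · rw [hPBdef]
      exact Finset.mem_filter.2 ⟨Finset.mem_product.2 ⟨hp, hq⟩, hfarN⟩
    · exact ⟨(hconv p.1 p.2 ω).1 hPp, (hconv q.1 q.2 ω).1 hPq⟩
  -- per pair bound
  have hpair : ∀ x : (ℕ × ℕ) × (ℕ × ℕ),
      μ (pairEvt X t x) ≤ TT * TT + (if nearPred m x then TT else 0) := by
    intro x
    by_cases hnx : nearPred m x
    · rw [if_pos hnx]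
      calc μ (pairEvt X t x)
          ≤ μ {ω | t < |X ((↑(min x.2.1 x.2.2) : ℤ), (↑(max x.2.1 x.2.2) : ℤ)) ω|} :=
            measure_mono Set.inter_subset_right
        _ = TT := hmarg _
        _ ≤ TT * TT + TT := le_add_self
    · rw [if_neg hnx, add_zero]
      rw [nearPred] at hnx
      have hfarZ : (m : ℤ) < max |(↑(min x.1.1 x.1.2) : ℤ) - ↑(min x.2.1 x.2.2)|
          |(↑(max x.1.1 x.1.2) : ℤ) - ↑(max x.2.1 x.2.2)| := by
        rcases not_and_or.1 hnx with h | h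
        · exact lt_max_iff.2 (Or.inl (by rw [abs_sub_comm]; exact not_le.1 h))
        · exact lt_max_iff.2 (Or.inr (by rw [abs_sub_comm]; exact not_le.1 h))
      have hpi := pair_indep μ X m hdep
        ((↑(min x.1.1 x.1.2) : ℤ), (↑(max x.1.1 x.1.2) : ℤ))
        ((↑(min x.2.1 x.2.2) : ℤ), (↑(max x.2.1 x.2.2) : ℤ)) hfarZ t
      calc μ (pairEvt X t x)
          = μ {ω | t < |X ((↑(min x.1.1 x.1.2) : ℤ), (↑(max x.1.1 x.1.2) : ℤ)) ω|} *
            μ {ω | t < |X ((↑(min x.2.1 x.2.2) : ℤ), (↑(max x.2.1 x.2.2) : ℤ)) ω|} := hpi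
        _ = TT * TT := by rw [hmarg, hmarg]
        _ ≤ TT * TT := le_rfl
  -- cardinality bounds
  have hBcard : ∀ l, (blockSet r l).card ≤ r * r := by
    intro l
    rw [blockSet, Finset.card_product, Nat.card_Icc, Nat.card_Ioc]
    have h2 : l * r - (l - 1) * r ≤ r := by
      rcases l with _ | l
      · simp
      · rw [Nat.succ_sub_one, Nat.succ_mul]; omega
    exact Nat.mul_le_mul (by omega) h2
  have hcount1 : ∀ l, (PB l).card ≤ r ^ 4 := by
    intro l
    rw [hPBdef]
    calc ((blockSet r l ×ˢ blockSet r l).filter (farPred m)).card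
        ≤ (blockSet r l ×ˢ blockSet r l).card := Finset.card_filter_le _ _
      _ = (blockSet r l).card * (blockSet r l).card := Finset.card_product _ _
      _ ≤ (r * r) * (r * r) := Nat.mul_le_mul (hBcard l) (hBcard l)
      _ = r ^ 4 := by ring
  have hcount2 : ∀ l, ((PB l).filter (nearPred m)).card ≤ r * r * (2 * (2 * m + 1) ^ 2) := by
    intro l
    have hsub2 : (PB l).filter (nearPred m) ⊆
        (blockSet r l ×ˢ blockSet r l).filter (fun x => farPred m x ∧ nearPred m x) := by
      intro x hx
      rw [Finset.mem_filter] at hx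
      obtain ⟨hx1, hx2⟩ := hx
      rw [hPBdef, Finset.mem_filter] at hx1
      rw [Finset.mem_filter]
      exact ⟨hx1.1, hx1.2, hx2⟩
    calc ((PB l).filter (nearPred m)).card
        ≤ ((blockSet r l ×ˢ blockSet r l).filter
            (fun x => farPred m x ∧ nearPred m x)).card := Finset.card_le_card hsub2
      _ ≤ (blockSet r l).card * (2 * (2 * m + 1) ^ 2) := by
          apply near_count (blockSet r l) m _
          intro x hx
          exact hx.2
      _ ≤ r * r * (2 * (2 * m + 1) ^ 2) := Nat.mul_le_mul_right _ (hBcard l)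
  have hcount3 : ∀ l, 2 ≤ l → ((PB l).filter (nearPred m)).card = 0 := by
    intro l hl
    rw [Finset.card_eq_zero, Finset.eq_empty_iff_forall_notMem]
    intro x hx
    rw [Finset.mem_filter] at hx
    obtain ⟨hx1, hnear⟩ := hx
    rw [hPBdef, Finset.mem_filter] at hx1
    obtain ⟨hxB, hdfar⟩ := hx1
    rw [Finset.mem_product] at hxB
    obtain ⟨hB1, hB2⟩ := hxB
    rw [blockSet, Finset.mem_product, Finset.mem_Icc, Finset.mem_Ioc] at hB1
    rw [blockSet, Finset.mem_product, Finset.mem_Icc, Finset.mem_Ioc] at hB2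
    have hrs : r ≤ (l - 1) * r := Nat.le_mul_of_pos_left r (by omega)
    have ha1 : x.1.1 ≤ r := hB1.1.2
    have ha2 : r < x.1.2 := lt_of_le_of_lt hrs hB1.2.1
    have hb1 : x.2.1 ≤ r := hB2.1.2
    have hb2 : r < x.2.2 := lt_of_le_of_lt hrs hB2.2.1
    rw [nearPred] at hnear
    obtain ⟨hn1, hn2⟩ := hnear
    rw [abs_le] at hn1 hn2
    rw [farPred] at hdfar
    apply hdfar
    refine ⟨?_, ?_, ?_, ?_⟩ <;> omega
  -- per-l sum bound
  have hper : ∀ l ∈ Finset.Icc 1 k, (∑ x ∈ PB l, μ (pairEvt X t x)) ≤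
      ((r ^ 4 : ℕ) : ℝ≥0∞) * (TT * TT) +
        (if l = 1 then ((r * r * (2 * (2 * m + 1) ^ 2) : ℕ) : ℝ≥0∞) * TT else 0) := by
    intro l hl
    calc ∑ x ∈ PB l, μ (pairEvt X t x)
        ≤ ∑ x ∈ PB l, (TT * TT + if nearPred m x then TT else 0) :=
          Finset.sum_le_sum fun x _ => hpair x
      _ = (PB l).card • (TT * TT) + ((PB l).filter (nearPred m)).card • TT := by
          rw [Finset.sum_add_distrib, Finset.sum_const, ← Finset.sum_filter, Finset.sum_const]
      _ = ((PB l).card : ℝ≥0∞) * (TT * TT) + (((PB l).filter (nearPred m)).card : ℝ≥0∞) * TT := by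
          rw [nsmul_eq_mul, nsmul_eq_mul]
      _ ≤ _ := by
          apply add_le_add
          · exact mul_le_mul' (Nat.cast_le.2 (hcount1 l)) le_rfl
          · by_cases hl1 : l = 1
            · rw [if_pos hl1]
              exact mul_le_mul' (Nat.cast_le.2 (hcount2 l)) le_rfl
            · rw [if_neg hl1]
              rw [Finset.mem_Icc] at hl
              rw [hcount3 l (by omega)]
              simp
  -- total bound in ℝ≥0∞
  have htot : μ {ω | ∃ l ∈ Finset.Icc 1 k,
        (∃ i ∈ Finset.Icc 1 r, ∃ j ∈ Finset.Ioc ((l - 1) * r) (l * r),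
          t / av < |symX X (i : ℤ) (j : ℤ) ω / av|) ∧
        ¬ ∃ i₀ j₀ : ℕ, ∀ i ∈ Finset.Icc 1 r, ∀ j ∈ Finset.Ioc ((l - 1) * r) (l * r),
            t / av < |symX X (i : ℤ) (j : ℤ) ω / av| →
              (i₀ ≤ i ∧ i ≤ i₀ + 2 * m ∧ j₀ ≤ j ∧ j ≤ j₀ + 2 * m)} ≤
      ((k * r ^ 4 : ℕ) : ℝ≥0∞) * (TT * TT) +
        ((r * r * (2 * (2 * m + 1) ^ 2) : ℕ) : ℝ≥0∞) * TT := by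
    calc μ _ ≤ μ (⋃ l ∈ Finset.Icc 1 k, ⋃ x ∈ PB l, pairEvt X t x) := measure_mono hsub
      _ ≤ ∑ l ∈ Finset.Icc 1 k, μ (⋃ x ∈ PB l, pairEvt X t x) := measure_biUnion_finset_le _ _
      _ ≤ ∑ l ∈ Finset.Icc 1 k, ∑ x ∈ PB l, μ (pairEvt X t x) :=
          Finset.sum_le_sum fun l _ => measure_biUnion_finset_le _ _
      _ ≤ ∑ l ∈ Finset.Icc 1 k, (((r ^ 4 : ℕ) : ℝ≥0∞) * (TT * TT) +
            (if l = 1 then ((r * r * (2 * (2 * m + 1) ^ 2) : ℕ) : ℝ≥0∞) * TT else 0)) :=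
          Finset.sum_le_sum hper
      _ = (Finset.Icc 1 k).card • (((r ^ 4 : ℕ) : ℝ≥0∞) * (TT * TT)) +
            ∑ l ∈ Finset.Icc 1 k,
              (if l = 1 then ((r * r * (2 * (2 * m + 1) ^ 2) : ℕ) : ℝ≥0∞) * TT else 0) := by
          rw [Finset.sum_add_distrib, Finset.sum_const]
      _ ≤ ((k * r ^ 4 : ℕ) : ℝ≥0∞) * (TT * TT) +
            ((r * r * (2 * (2 * m + 1) ^ 2) : ℕ) : ℝ≥0∞) * TT := by
          apply add_le_add
          · rw [Nat.card_Icc, nsmul_eq_mul]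
            have hkk : k + 1 - 1 = k := by omega
            rw [hkk, Nat.cast_mul, mul_assoc]
          · rw [Finset.sum_ite_eq' (Finset.Icc 1 k) 1]
            split_ifs
            · exact le_rfl
            · exact zero_le
  -- pass to toReal
  have hne1 : ((k * r ^ 4 : ℕ) : ℝ≥0∞) * (TT * TT) ≠ ⊤ :=
    ENNReal.mul_ne_top (ENNReal.natCast_ne_top _) (ENNReal.mul_ne_top hTTne hTTne)
  have hne2 : ((r * r * (2 * (2 * m + 1) ^ 2) : ℕ) : ℝ≥0∞) * TT ≠ ⊤ :=
    ENNReal.mul_ne_top (ENNReal.natCast_ne_top _) hTTne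
  calc (μ _).toReal ≤ (((k * r ^ 4 : ℕ) : ℝ≥0∞) * (TT * TT) +
        ((r * r * (2 * (2 * m + 1) ^ 2) : ℕ) : ℝ≥0∞) * TT).toReal :=
        ENNReal.toReal_mono (by exact ENNReal.add_ne_top.2 ⟨hne1, hne2⟩) htot
    _ = ((k * r ^ 4 : ℕ) : ℝ) * (TT.toReal) ^ 2 +
        ((r * r * (2 * (2 * m + 1) ^ 2) : ℕ) : ℝ) * TT.toReal := by
        rw [ENNReal.toReal_add hne1 hne2, ENNReal.toReal_mul, ENNReal.toReal_mul,
          ENNReal.toReal_mul, ENNReal.toReal_natCast, ENNReal.toReal_natCast]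
        ring

set_option maxHeartbeats 1000000 in
/-- Lemma 4.12 of the paper: the probability that some block in the first
block-row of `Â_n^{>ε_n}` has nonzero entries not all fitting inside a
`(2m+1) × (2m+1)` square is `o(1/k_n)`. -/
theorem stmt11 {Ω : Type*} [MeasurableSpace Ω] (μ : Measure Ω) [IsProbabilityMeasure μ]
    (X : ℤ × ℤ → Ω → ℝ) (hmeas : ∀ p, Measurable (X p))
    (m : ℕ) (hstat : IsStationaryField μ X) (hdep : IsMDependent μ X m)
    (α : ℝ) (hα1 : 2 ≤ α) (hα2 : α < 4) (hreg : IsRegVarying μ X α)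
    (a : ℕ → ℝ) (ha : IsNormSeq μ X a)
    (β η : ℝ)
    (hβ1 : 4 / (3 * α) < β) (hβ2 : β < 2 * (8 - α) / (α * (10 - α)))
    (hη1 : 5 / 6 < η) (hη2 : η < 1) :
    Tendsto
      (fun n : ℕ => (kseq η n : ℝ) *
        (μ {ω | ∃ l ∈ Finset.Icc 1 (kseq η n),
            (∃ i ∈ Finset.Icc 1 (rseq η n), ∃ j ∈ Finset.Ioc ((l - 1) * rseq η n) (l * rseq η n),
              (n : ℝ) ^ β / a (n ^ 2) < |symX X (i : ℤ) (j : ℤ) ω / a (n ^ 2)|) ∧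
            ¬ ∃ i₀ j₀ : ℕ, ∀ i ∈ Finset.Icc 1 (rseq η n),
                ∀ j ∈ Finset.Ioc ((l - 1) * rseq η n) (l * rseq η n),
                  (n : ℝ) ^ β / a (n ^ 2) < |symX X (i : ℤ) (j : ℤ) ω / a (n ^ 2)| →
                    (i₀ ≤ i ∧ i ≤ i₀ + 2 * m ∧ j₀ ≤ j ∧ j ≤ j₀ + 2 * m)}).toReal)
      (atTop ⊓ Filter.principal (goodSet η)) (nhds 0) := by
  classical
  obtain ⟨L, hL, hTLraw⟩ := hreg
  have hαpos : (0:ℝ) < α := by linarith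
  have hβpos : (0:ℝ) < β := lt_trans (by positivity) hβ1
  have hαβ : 2 - η < α * β := by
    have h4 : (4:ℝ) < β * (3 * α) := (div_lt_iff₀ (by positivity)).mp hβ1
    nlinarith
  set α' : ℝ := (α * β + (2 - η)) / (2 * β) with hα'def
  have hα'pos : 0 < α' := by
    apply div_pos ?_ (by positivity)
    nlinarith
  have hα'lt : α' < α := by
    rw [hα'def, div_lt_iff₀ (by positivity)]
    nlinarith
  have hβα' : β * α' = (α * β + (2 - η)) / 2 := by
    rw [hα'def]
    field_simp
  set e : ℝ := 2 - η - β * α' with hedef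
  have he : e < 0 := by
    rw [hedef, hβα']
    linarith
  -- tail bound
  have hanti : ∀ x y : ℝ, 0 < x → x ≤ y →
      (μ {ω | y < |X (0, 0) ω|}).toReal ≤ (μ {ω | x < |X (0, 0) ω|}).toReal := by
    intro x y hx hxy
    apply ENNReal.toReal_mono (measure_ne_top μ _)
    apply measure_mono
    intro ω hω
    exact lt_of_le_of_lt hxy hω
  obtain ⟨C, hCpos, x₀, hx₀1, hCb⟩ :=
    tail_power_bound (fun x => (μ {ω | x < |X (0, 0) ω|}).toReal) L α α' hanti hTLraw hL
      hα'pos hα'lt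
  set cm : ℕ := 2 * (2 * m + 1) ^ 2 with hcmdef
  set D : ℝ := C ^ 2 + (cm : ℝ) * C with hDdef
  have hg : Tendsto (fun n : ℕ => D * (n:ℝ) ^ e) atTop (nhds 0) := by
    have h1 : Tendsto (fun x : ℝ => x ^ (-(-e))) atTop (nhds 0) :=
      tendsto_rpow_neg_atTop (by linarith)
    have h2 : Tendsto (fun n : ℕ => (n:ℝ) ^ e) atTop (nhds 0) := by
      have := h1.comp tendsto_natCast_atTop_atTop (α := ℕ)
      simp only [neg_neg] at this
      exact this
    simpa using h2.const_mul D
  apply Tendsto.mono_left ?_ inf_le_left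
  apply squeeze_zero' (g := fun n : ℕ => D * (n:ℝ) ^ e) ?_ ?_ hg
  · filter_upwards with n
    positivity
  · have hA : ∀ᶠ n : ℕ in atTop, 0 < a (n ^ 2) := by
      have hn2 : Tendsto (fun n : ℕ => n ^ 2) atTop atTop :=
        tendsto_atTop_mono (fun n => Nat.le_self_pow (by norm_num) n) tendsto_id
      exact (ha.1.comp hn2).eventually_gt_atTop 0
    have hB : ∀ᶠ n : ℕ in atTop, x₀ ≤ (n:ℝ) ^ β := by
      have : Tendsto (fun n : ℕ => (n:ℝ) ^ β) atTop atTop :=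
        (tendsto_rpow_atTop hβpos).comp tendsto_natCast_atTop_atTop
      exact this.eventually_ge_atTop x₀
    filter_upwards [hA, hB, eventually_ge_atTop 1] with n hav ht hn1
    have hN1 : (1:ℝ) ≤ (n:ℝ) := by exact_mod_cast hn1
    have hNpos : (0:ℝ) < (n:ℝ) := by linarith
    set Tt : ℝ := (μ {ω | (n:ℝ) ^ β < |X (0, 0) ω|}).toReal with hTtdef
    have hTt0 : 0 ≤ Tt := ENNReal.toReal_nonneg
    have hTtb : Tt ≤ C * (n:ℝ) ^ (-(β * α')) := by
      have h1 := hCb ((n:ℝ) ^ β) ht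
      have h2 : ((n:ℝ) ^ β) ^ (-α') = (n:ℝ) ^ (-(β * α')) := by
        rw [← Real.rpow_mul hNpos.le, show β * -α' = -(β * α') from by ring]
      rw [h2] at h1
      exact h1
    have hcore := core_estimate μ X hmeas m hstat hdep (kseq η n) (rseq η n)
      ((n:ℝ) ^ β) (a (n ^ 2)) hav
    have hkle : ((kseq η n : ℕ) : ℝ) ≤ (n:ℝ) ^ η := Nat.floor_le (by positivity)
    have hrle : ((rseq η n : ℕ) : ℝ) ≤ (n:ℝ) ^ (1 - η) := Nat.floor_le (by positivity)
    have hcol1 : (n:ℝ) ^ η * (n:ℝ) ^ η * (n:ℝ) ^ ((1 - η) * 4) *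
        ((n:ℝ) ^ (-(β * α')) * (n:ℝ) ^ (-(β * α'))) = (n:ℝ) ^ (e + e) := by
      rw [← Real.rpow_add hNpos, ← Real.rpow_add hNpos, ← Real.rpow_add hNpos,
        ← Real.rpow_add hNpos]
      congr 1
      rw [hedef]
      ring
    have hcol2 : (n:ℝ) ^ η * ((n:ℝ) ^ (1 - η) * (n:ℝ) ^ (1 - η)) * (n:ℝ) ^ (-(β * α'))
        = (n:ℝ) ^ e := by
      rw [← Real.rpow_add hNpos, ← Real.rpow_add hNpos, ← Real.rpow_add hNpos]
      congr 1
      rw [hedef]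
      ring
    have hpow4 : ((n:ℝ) ^ (1 - η)) ^ (4:ℕ) = (n:ℝ) ^ ((1 - η) * 4) := by
      rw [← Real.rpow_natCast ((n:ℝ) ^ (1 - η)) 4, ← Real.rpow_mul hNpos.le]
      norm_num
    calc (kseq η n : ℝ) * (μ _).toReal
        ≤ (kseq η n : ℝ) * (((kseq η n * rseq η n ^ 4 : ℕ) : ℝ) * Tt ^ 2 +
            ((rseq η n * rseq η n * cm : ℕ) : ℝ) * Tt) := by
          apply mul_le_mul_of_nonneg_left hcore (by positivity)
      _ = (kseq η n : ℝ) * (((kseq η n : ℝ) * (rseq η n : ℝ) ^ 4) * Tt ^ 2 +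
            ((rseq η n : ℝ) * (rseq η n : ℝ) * (cm : ℝ)) * Tt) := by
          push_cast
          ring
      _ ≤ (n:ℝ) ^ η * (((n:ℝ) ^ η * ((n:ℝ) ^ (1 - η)) ^ (4:ℕ)) * (C * (n:ℝ) ^ (-(β * α'))) ^ 2 +
            ((n:ℝ) ^ (1 - η) * (n:ℝ) ^ (1 - η) * (cm : ℝ)) * (C * (n:ℝ) ^ (-(β * α')))) := by
          gcongr <;> first | exact hkle | exact hrle | exact hTtb | positivity
      _ = C ^ 2 * ((n:ℝ) ^ η * (n:ℝ) ^ η * ((n:ℝ) ^ (1 - η)) ^ (4:ℕ) *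
            ((n:ℝ) ^ (-(β * α')) * (n:ℝ) ^ (-(β * α')))) +
          (cm : ℝ) * C * ((n:ℝ) ^ η * ((n:ℝ) ^ (1 - η) * (n:ℝ) ^ (1 - η)) *
            (n:ℝ) ^ (-(β * α'))) := by ring
      _ = C ^ 2 * (n:ℝ) ^ (e + e) + (cm : ℝ) * C * (n:ℝ) ^ e := by
          rw [hpow4, hcol1, hcol2]
      _ ≤ C ^ 2 * (n:ℝ) ^ e + (cm : ℝ) * C * (n:ℝ) ^ e := by
          have hee : (n:ℝ) ^ (e + e) ≤ (n:ℝ) ^ e :=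
            Real.rpow_le_rpow_of_exponent_le hN1 (by linarith)
          have hC2 : (0:ℝ) ≤ C ^ 2 := sq_nonneg C
          nlinarith
      _ = D * (n:ℝ) ^ e := by
          rw [hDdef]
          ring
end
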